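/- For every integer ℓ ≥ 1 and every positive integer k, the fraction p/q = (ℓ+1)/((ℓ+1)!·k + 1) satisfies: gcd(p,q) = 1, ℓ is the smallest nonnegative integer such that p divides q + ℓ, and ℓ is the smallest nonnegative integer m such that (p/q − Σ_{n=1}^m 1/a_n)^{−1} is a positive integer, where (a_n) is the greedy Egyptian fraction expansion of p/q. -/

import Mathlib

theorem stmt_13 (ℓ k : ℕ) (hℓ : 1 ≤ ℓ) (hk : 1 ≤ k)
    (p q : ℕ) (hp : p = ℓ + 1) (hq : q = (ℓ + 1).factorial * k + 1)
    (a : ℕ → ℤ)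
    (ha1 : a 1 = ⌊1/((p:ℝ)/q)⌋ + 1)
    (harec : ∀ j, 2 ≤ j →
      a j = ⌊1/((p:ℝ)/q - ∑ n ∈ Finset.Ico 1 j, (1:ℝ)/(a n))⌋ + 1) :
    Nat.gcd p q = 1 ∧
    (p ∣ q + ℓ ∧ ∀ j : ℕ, j < ℓ → ¬ p ∣ q + j) ∧
    IsLeast {m : ℕ | ∃ M : ℕ, 0 < M ∧
      ((p:ℝ)/q - ∑ n ∈ Finset.Icc 1 m, (1:ℝ)/(a n))⁻¹ = M} ℓ := by
  subst hp hq
  obtain ⟨t, ht⟩ : (ℓ + 1) ∣ (ℓ + 1).factorial * k :=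
    (Nat.dvd_factorial (by omega) le_rfl).mul_right k
  have key : ∀ m, m ≤ ℓ → ∃ K : ℕ, 1 ≤ K ∧
      (((ℓ + 1 : ℕ) : ℝ) / (((ℓ + 1).factorial * k + 1 : ℕ) : ℝ)
          - ∑ n ∈ Finset.Icc 1 m, (1:ℝ)/(a n))
        = ((ℓ + 1 - m : ℕ) : ℝ) / (((ℓ + 1 - m).factorial * K + 1 : ℕ) : ℝ) := by
    intro m
    induction m with
    | zero => intro _; exact ⟨k, hk, by simp⟩
    | succ m ih =>
      intro hm
      obtain ⟨K, hK, hr⟩ := ih (by omega)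
      set L := ℓ - m with hL
      have hL1 : 1 ≤ L := by omega
      have hLm : ℓ + 1 - m = L + 1 := by omega
      have hLm2 : ℓ + 1 - (m + 1) = L := by omega
      have hD1 : (0:ℝ) < (((L + 1).factorial * K + 1 : ℕ) : ℝ) := by positivity
      have hx : 1 / (((ℓ + 1 : ℕ) : ℝ) / (((ℓ + 1).factorial * k + 1 : ℕ) : ℝ)
            - ∑ n ∈ Finset.Icc 1 m, (1:ℝ)/(a n))
          = (((L + 1).factorial * K + 1 : ℕ) : ℝ) / ((L : ℝ) + 1) := by
        rw [hr, hLm, one_div, inv_div]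
        push_cast
        ring
      have hfloor : ⌊(((L + 1).factorial * K + 1 : ℕ) : ℝ) / ((L : ℝ) + 1)⌋
          = (L.factorial * K : ℕ) := by
        have hfs : ((L + 1).factorial : ℝ) = ((L:ℝ) + 1) * (L.factorial : ℝ) := by
          push_cast [Nat.factorial_succ]; ring
        rw [Int.floor_eq_iff]
        have hL0 : (0:ℝ) < (L : ℝ) + 1 := by positivity
        constructor
        · rw [le_div_iff₀ hL0]
          push_cast [Nat.factorial_succ]
          nlinarith
        · rw [div_lt_iff₀ hL0]
          push_cast [Nat.factorial_succ]
          nlinarith [(by exact_mod_cast hL1 : (1:ℝ) ≤ (L:ℝ)),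
            (by positivity : (0:ℝ) < (L.factorial : ℝ))]
      have ha : a (m + 1) = ((L.factorial * K + 1 : ℕ) : ℤ) := by
        rcases Nat.eq_zero_or_pos m with h0 | h1
        · subst h0
          rw [ha1]
          rw [show (∑ n ∈ Finset.Icc 1 0, (1:ℝ)/(a n)) = 0 from by simp] at hx
          rw [sub_zero] at hx
          rw [hx, hfloor]
          push_cast; ring
        · rw [harec (m + 1) (by omega), Finset.Ico_add_one_right_eq_Icc, hx, hfloor]
          push_cast; ring
      refine ⟨K * ((L + 1).factorial * K + L + 2), Nat.mul_pos hK (Nat.succ_pos _), ?_⟩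
      rw [Finset.sum_Icc_succ_top (by omega : 1 ≤ m + 1), ha]
      rw [← sub_sub, hr, hLm, hLm2]
      have hden : (L.factorial * (K * ((L + 1).factorial * K + L + 2)) + 1 : ℕ)
          = ((L + 1).factorial * K + 1) * (L.factorial * K + 1) := by
        rw [Nat.factorial_succ]; ring
      rw [hden]
      have h1 : (0:ℝ) < ((L.factorial * K + 1 : ℕ) : ℝ) := by positivity
      push_cast [Nat.factorial_succ]
      field_simp
      ring
  refine ⟨?_, ⟨⟨t + 1, by rw [ht]; ring⟩, ?_⟩, ?_, ?_⟩
  · rw [ht, Nat.gcd_rec, Nat.mul_add_mod, Nat.mod_eq_of_lt (by omega), Nat.gcd_one_left]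
  · intro j hj hdvd
    rw [ht] at hdvd
    have h2 : (ℓ + 1) ∣ (ℓ + 1) * t + (1 + j) := by
      convert hdvd using 1; ring
    have h3 : (ℓ + 1) ∣ 1 + j := (Nat.dvd_add_right (Dvd.intro t rfl)).mp h2
    have := Nat.le_of_dvd (by omega) h3
    omega
  · obtain ⟨K, hK, hr⟩ := key ℓ le_rfl
    refine ⟨K + 1, by omega, ?_⟩
    rw [hr]
    norm_num
  · rintro m ⟨M, hM, hMe⟩
    by_contra h
    push_neg at h
    obtain ⟨K, hK, hr⟩ := key m h.le
    set L := ℓ - m with hL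
    have hL1 : 1 ≤ L := by omega
    have hLm : ℓ + 1 - m = L + 1 := by omega
    rw [hr, hLm] at hMe
    have hD1 : (0:ℝ) < (((L + 1).factorial * K + 1 : ℕ) : ℝ) := by positivity
    have hMe2 : (((L + 1).factorial * K + 1 : ℕ) : ℝ) = (M : ℝ) * ((L + 1 : ℕ) : ℝ) := by
      rw [inv_div] at hMe
      field_simp at hMe
      push_cast at hMe ⊢
      linarith [hMe]
    have hnat : (L + 1).factorial * K + 1 = M * (L + 1) := by exact_mod_cast hMe2
    obtain ⟨s, hs⟩ : (L + 1) ∣ (L + 1).factorial * K :=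
      (Nat.dvd_factorial (by omega) le_rfl).mul_right K
    have hdvd : (L + 1) ∣ (L + 1) * s + 1 := by
      rw [← hs, hnat]; exact Dvd.intro M (by ring)
    have h1 : (L + 1) ∣ 1 := (Nat.dvd_add_right (Dvd.intro s rfl)).mp hdvd
    have := Nat.le_of_dvd (by omega) h1
    omega
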